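/- Let k be an algebraically closed field of characteristic p > 0, let q be a power of p, and let F₋ : GL_n(k) → GL_n(k) be the map sending a matrix x to the entrywise q-th power of the inverse of its transpose; it is a group endomorphism and induces an endomorphism of PGL_n(k). Let n ≥ 2 and ζ ∈ k a primitive n-th root of unity. Then the image s̄ in PGL_n(k) of the diagonal matrix diag(1, ζ, ζ², …, ζ^{n−1}) satisfies F₋(s̄) = s̄ if and only if n divides q + 1. -/

import Mathlib

/-- Over an algebraically closed field of characteristic `p > 0`, with `q` a
power of `p` and `F₋` the twisted Frobenius `x ↦ (ᵗ(x⁻¹))^{(q)}` (entrywise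
`q`-th power of the inverse transpose), the image in `PGL_n(k)` of
`diag(1, ζ, ζ², …, ζ^{n−1})` (for `ζ` a primitive `n`-th root of unity,
`n ≥ 2`) is `F₋`-stable if and only if `n` divides `q + 1`. -/
theorem twisted_frobenius_fixes_diag_in_PGL_iff {k : Type*} [Field k] [IsAlgClosed k]
    (p : ℕ) (hp : p.Prime) [CharP k p] (q : ℕ) (hq : ∃ m : ℕ, 0 < m ∧ q = p ^ m)
    (n : ℕ) (hn : 2 ≤ n) (ζ : k) (hζ : IsPrimitiveRoot ζ n)
    (S T : GL (Fin n) k)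
    (hS : (S : Matrix (Fin n) (Fin n) k) = Matrix.diagonal fun i : Fin n => ζ ^ (i : ℕ))
    (hT : (T : Matrix (Fin n) (Fin n) k) =
      ((S⁻¹ : GL (Fin n) k) : Matrix (Fin n) (Fin n) k).transpose.map fun x => x ^ q) :
    QuotientGroup.mk' (Subgroup.center (GL (Fin n) k)) T =
      QuotientGroup.mk' (Subgroup.center (GL (Fin n) k)) S ↔ n ∣ q + 1 := by
  obtain ⟨m, hm, rfl⟩ := hq
  have hq0 : p ^ m ≠ 0 := pow_ne_zero _ hp.pos.ne'
  set q := p ^ m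
  have hn0 : 0 < n := by omega
  have hζ0 : ζ ≠ 0 := hζ.ne_zero hn0.ne'
  have hSinv : ((S⁻¹ : GL (Fin n) k) : Matrix (Fin n) (Fin n) k) =
      Matrix.diagonal fun i : Fin n => (ζ ^ (i : ℕ))⁻¹ := by
    rw [Matrix.coe_units_inv]
    apply Matrix.inv_eq_right_inv
    rw [hS, Matrix.diagonal_mul_diagonal, ← Matrix.diagonal_one]
    have : (fun i : Fin n => ζ ^ (i : ℕ) * (ζ ^ (i : ℕ))⁻¹) = fun _ : Fin n => (1 : k) :=
      funext fun i => mul_inv_cancel₀ (pow_ne_zero _ hζ0)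
    rw [this]
  have hTd : (T : Matrix (Fin n) (Fin n) k) =
      Matrix.diagonal fun i : Fin n => ((ζ ^ (i : ℕ))⁻¹) ^ q := by
    rw [hT, hSinv, Matrix.diagonal_transpose, Matrix.diagonal_map (by simp [hq0])]
  rw [QuotientGroup.mk'_eq_mk']
  constructor
  · rintro ⟨z, hz, hTz⟩
    have hzeq : z = T⁻¹ * S := by rw [← hTz]; group
    have hzc : (z : Matrix (Fin n) (Fin n) k) =
        Matrix.diagonal fun i : Fin n => (ζ ^ (i : ℕ)) ^ q * ζ ^ (i : ℕ) := by
      have hTinv : ((T⁻¹ : GL (Fin n) k) : Matrix (Fin n) (Fin n) k) =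
          Matrix.diagonal fun i : Fin n => (ζ ^ (i : ℕ)) ^ q := by
        rw [Matrix.coe_units_inv]
        apply Matrix.inv_eq_right_inv
        rw [hTd, Matrix.diagonal_mul_diagonal, ← Matrix.diagonal_one]
        have : (fun i : Fin n => ((ζ ^ (i : ℕ))⁻¹) ^ q * (ζ ^ (i : ℕ)) ^ q) =
            fun _ : Fin n => (1 : k) := funext fun i => by
          rw [← mul_pow, inv_mul_cancel₀ (pow_ne_zero _ hζ0), one_pow]
        rw [this]
      rw [hzeq, Units.val_mul, hTinv, hS, Matrix.diagonal_mul_diagonal]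
    -- transvection unit 1 + E₀₁
    set i0 : Fin n := ⟨0, by omega⟩
    set i1 : Fin n := ⟨1, by omega⟩
    have hne : i1 ≠ i0 := by simp [i0, i1, Fin.ext_iff]
    set E : Matrix (Fin n) (Fin n) k := Matrix.single i0 i1 1 with hE
    have hEE : E * E = 0 := by
      rw [hE]; exact Matrix.single_mul_single_of_ne (c := (1 : k)) i0 i1 i0 (h := hne) (d := 1)
    have hmul : (1 + E) * (1 - E) = 1 := by
      rw [mul_sub, add_mul, add_mul, one_mul, mul_one, hEE]; simp
    have hmul' : (1 - E) * (1 + E) = 1 := by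
      rw [sub_mul, mul_add, mul_add, one_mul, mul_one, hEE]; simp
    set V : GL (Fin n) k := ⟨1 + E, 1 - E, hmul, hmul'⟩
    have hcomm := Subgroup.mem_center_iff.mp hz V
    have hcm : (1 + E) * (z : Matrix (Fin n) (Fin n) k) = (z : Matrix _ _ k) * (1 + E) := by
      have := congrArg (Units.val) hcomm
      simpa [V] using this
    have hED : E * (z : Matrix (Fin n) (Fin n) k) = (z : Matrix _ _ k) * E := by
      have h := hcm
      rw [add_mul, mul_add, one_mul, mul_one] at h
      exact add_left_cancel h
    have hentry := congrFun (congrFun hED i0) i1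
    rw [hzc, Matrix.mul_diagonal, Matrix.diagonal_mul] at hentry
    simp [hE, Matrix.single_apply_same, i0, i1] at hentry
    have hone : ζ ^ (q + 1) = 1 := by
      rw [pow_succ]
      simpa using hentry
    exact (hζ.pow_eq_one_iff_dvd _).mp hone
  · intro hdvd
    have hTS : T = S := by
      apply Units.ext
      rw [hTd, hS]
      have hfun : (fun i : Fin n => ((ζ ^ (i : ℕ))⁻¹) ^ q) = fun i : Fin n => ζ ^ (i : ℕ) := by
        funext i
        have h1 : (ζ ^ (i : ℕ)) ^ q * ζ ^ (i : ℕ) = 1 := by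
          rw [← pow_mul, ← pow_add, hζ.pow_eq_one_iff_dvd]
          have := hdvd.mul_left (i : ℕ)
          rwa [Nat.mul_add, Nat.mul_one] at this
        rw [inv_pow (ζ ^ (i : ℕ)) q]
        exact inv_eq_of_mul_eq_one_right h1
      rw [hfun]
    exact ⟨1, Subgroup.one_mem _, by rw [mul_one, hTS]⟩
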